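/- arXiv:1808.03019 — 9 statements merged into one kernel-verified Lean document; each statement's English description precedes it below -/
import Mathlib

section
/- Let (X_n)_{n≥1} be nonnegative real-valued random variables on a common probability space, all having the same distribution, and suppose this common distribution has finite logarithmic moment, i.e. E[log(1 + X_1)] < ∞. Then for every c ∈ (0,1), the series ∑_{n=1}^∞ cⁿ X_n converges almost surely. -/
open MeasureTheory ProbabilityTheory

/-- If the `X n` are nonnegative, identically distributed random variables
(not assumed independent) whose common distribution has finite logarithmic moment
`E[log (1 + X)] < ∞`, then `∑ c ^ n * X n` converges almost surely for every `c ∈ (0,1)`. -/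
theorem stmt_2 {Ω : Type*} [MeasurableSpace Ω] (μ : Measure Ω) [IsProbabilityMeasure μ]
    (X : ℕ → Ω → ℝ)
    (hnonneg : ∀ n ω, 0 ≤ X n ω)
    (hident : ∀ n, IdentDistrib (X n) (X 0) μ μ)
    (hlog : Integrable (fun ω => Real.log (1 + X 0 ω)) μ)
    (c : ℝ) (hc : c ∈ Set.Ioo (0 : ℝ) 1) :
    ∀ᵐ ω ∂μ, Summable (fun n => c ^ n * X n ω) := by
  obtain ⟨hc0, hc1⟩ := hc
  set ε : ℝ := (-Real.log c) / 2 with hε_def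
  have hlogc : Real.log c < 0 := Real.log_neg hc0 hc1
  have hε : 0 < ε := by rw [hε_def]; linarith
  have hr : c * Real.exp ε < 1 := by
    have : c * Real.exp ε = Real.exp (Real.log c + ε) := by
      rw [Real.exp_add, Real.exp_log hc0]
    rw [this]
    have : Real.log c + ε < 0 := by
      rw [hε_def]; linarith
    calc Real.exp (Real.log c + ε) < Real.exp 0 := Real.exp_lt_exp.2 this
    _ = 1 := Real.exp_zero
  have hr0 : 0 ≤ c * Real.exp ε := by positivity
  -- the function ε⁻¹ * log (1 + X 0) is nonnegative and integrable
  set Y : Ω → ℝ := fun ω => ε⁻¹ * Real.log (1 + X 0 ω) with hY_def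
  have hYint : Integrable Y μ := hlog.const_mul _
  have hYnn : 0 ≤ Y := by
    intro ω
    have h1 : (0:ℝ) ≤ Real.log (1 + X 0 ω) :=
      Real.log_nonneg (by linarith [hnonneg 0 ω])
    positivity
  -- tail sum is finite
  letI : MeasureSpace Ω := ⟨μ⟩
  have hP : IsProbabilityMeasure (ℙ : Measure Ω) := ‹_›
  have htail : (∑' j : ℕ, μ {ω | Y ω ∈ Set.Ioi (j : ℝ)}) < ⊤ :=
    ProbabilityTheory.tsum_prob_mem_Ioi_lt_top hYint hYnn
  -- translate to the sets for X n via identical distribution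
  set s : ℕ → Set Ω := fun n => {ω | (n : ℝ) < ε⁻¹ * Real.log (1 + X n ω)} with hs_def
  have hmeas : ∀ n : ℕ, μ (s n) = μ {ω | Y ω ∈ Set.Ioi (n : ℝ)} := by
    intro n
    have hA : MeasurableSet {x : ℝ | (n : ℝ) < ε⁻¹ * Real.log (1 + x)} := by
      have : Measurable fun x : ℝ => ε⁻¹ * Real.log (1 + x) :=
        (Real.measurable_log.comp (measurable_const.add measurable_id)).const_mul _
      exact measurableSet_lt measurable_const this
    have := (hident n).measure_mem_eq hA
    simpa [hs_def, hY_def, Set.preimage, Set.mem_Ioi] using this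
  have htail' : (∑' n : ℕ, μ (s n)) ≠ ⊤ := by
    rw [tsum_congr hmeas]
    exact htail.ne
  -- Borel-Cantelli
  filter_upwards [MeasureTheory.ae_eventually_notMem htail'] with ω hω
  obtain ⟨N, hN⟩ := (Filter.eventually_atTop).1 hω
  rw [← summable_nat_add_iff N]
  apply Summable.of_nonneg_of_le
  · intro n
    have := hnonneg (n + N) ω
    positivity
  · intro n
    have hn : ω ∉ s (n + N) := hN (n + N) (Nat.le_add_left N n)
    have h1 : ε⁻¹ * Real.log (1 + X (n + N) ω) ≤ (n + N : ℕ) := not_lt.1 hn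
    have h2 : Real.log (1 + X (n + N) ω) ≤ ε * (n + N : ℕ) := by
      rw [mul_comm]
      calc Real.log (1 + X (n + N) ω) = ε * (ε⁻¹ * Real.log (1 + X (n + N) ω)) := by
            field_simp
      _ ≤ ε * (n + N : ℕ) := by
            exact mul_le_mul_of_nonneg_left h1 hε.le
      _ = (n + N : ℕ) * ε := mul_comm _ _
    have h3 : X (n + N) ω ≤ Real.exp ε ^ (n + N) := by
      have hx : (0:ℝ) < 1 + X (n + N) ω := by linarith [hnonneg (n + N) ω]
      have := (Real.log_le_iff_le_exp hx).1 (by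
        calc Real.log (1 + X (n + N) ω) ≤ ε * (n + N : ℕ) := h2
        _ = ((n + N : ℕ) : ℝ) * ε := mul_comm _ _)
      rw [Real.exp_nat_mul] at this
      linarith [hnonneg (n + N) ω]
    calc c ^ (n + N) * X (n + N) ω ≤ c ^ (n + N) * Real.exp ε ^ (n + N) :=
          mul_le_mul_of_nonneg_left h3 (pow_nonneg hc0.le _)
    _ = (c * Real.exp ε) ^ (n + N) := (mul_pow _ _ _).symm
  · simpa [pow_add] using
      (summable_geometric_of_lt_one hr0 hr).mul_right ((c * Real.exp ε) ^ N)
end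

section
/- Let k be a natural number, let g : {0,1}^k → {0,1} be an arbitrary function, and for σ ∈ {0,1}^k say that coordinate i is pivotal for g at σ if flipping the i-th coordinate of σ changes the value of g. Let p ∈ (0,1), set ν(1) = p and ν(0) = 1 − p, and let μ_p be the product measure on {0,1}^k giving each σ probability ∏_i ν(σ_i). Then for every a, b ∈ {0,1}: (1/ν(b)) · ∑_{σ : g(σ)=a} μ_p({σ}) · #{i : σ_i = b and i is pivotal for g at σ} = (1/ν(1−b)) · ∑_{σ : g(σ)=1−a} μ_p({σ}) · #{i : σ_i = 1−b and i is pivotal for g at σ}. -/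
/-- Let `g : {0,1}^k → {0,1}` and say coordinate `i` is pivotal for `g`
at `σ` if flipping it changes the value of `g`. With `ν true = p`, `ν false = 1 - p`
and the corresponding product measure weight `∏ i, ν (σ i)`, for all `a b ∈ {0,1}`:
`(1/ν b) ∑_{σ : g σ = a} weight(σ) ⬝ #{pivotal i with σ i = b}`
`= (1/ν (¬b)) ∑_{σ : g σ = ¬a} weight(σ) ⬝ #{pivotal i with σ i = ¬b}`. -/
theorem stmt_4 (k : ℕ) (g : (Fin k → Bool) → Bool) (p : ℝ) (hp : p ∈ Set.Ioo (0 : ℝ) 1)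
    (ν : Bool → ℝ) (hν1 : ν true = p) (hν0 : ν false = 1 - p) (a b : Bool) :
    (ν b)⁻¹ * ∑ σ : Fin k → Bool, (if g σ = a then
        (∏ i, ν (σ i)) *
          ((Finset.univ.filter fun i : Fin k =>
              σ i = b ∧ g (Function.update σ i (!(σ i))) ≠ g σ).card : ℝ)
      else 0)
    = (ν (!b))⁻¹ * ∑ σ : Fin k → Bool, (if g σ = !a then
        (∏ i, ν (σ i)) *
          ((Finset.univ.filter fun i : Fin k =>
              σ i = !b ∧ g (Function.update σ i (!(σ i))) ≠ g σ).card : ℝ)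
      else 0) := by
  have hp0 : (0:ℝ) < p := hp.1
  have hp1 : p < 1 := hp.2
  have hν : ∀ c, ν c ≠ 0 := by
    intro c; cases c <;> [rw [hν0]; rw [hν1]] <;> nlinarith
  set F : Bool → Bool → ((Fin k → Bool) × Fin k) → ℝ := fun a b x =>
    if g x.1 = a ∧ x.1 x.2 = b ∧ g (Function.update x.1 x.2 (!(x.1 x.2))) ≠ g x.1
      then (ν b)⁻¹ * ∏ j, ν (x.1 j) else 0 with hF
  have main : ∀ a b : Bool, (ν b)⁻¹ * ∑ σ : Fin k → Bool, (if g σ = a then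
        (∏ i, ν (σ i)) *
          ((Finset.univ.filter fun i : Fin k =>
              σ i = b ∧ g (Function.update σ i (!(σ i))) ≠ g σ).card : ℝ)
      else 0) = ∑ x : (Fin k → Bool) × Fin k, F a b x := by
    intro a b
    rw [Fintype.sum_prod_type, Finset.mul_sum]
    refine Finset.sum_congr rfl fun σ _ => ?_
    simp only [hF]
    by_cases hg : g σ = a
    · rw [if_pos hg, Finset.card_filter]
      push_cast
      rw [Finset.mul_sum, Finset.mul_sum]
      refine Finset.sum_congr rfl fun i _ => ?_
      by_cases hc : σ i = b ∧ g (Function.update σ i (!(σ i))) ≠ g σ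
      · rw [if_pos hc, mul_one, if_pos ⟨hg, hc⟩]
      · rw [if_neg hc, mul_zero, mul_zero, if_neg (fun h => hc h.2)]
    · rw [if_neg hg, mul_zero]
      exact (Finset.sum_eq_zero fun i _ => if_neg (fun h => hg h.1)).symm
  rw [main a b, main (!a) (!b)]
  set e : ((Fin k → Bool) × Fin k) → ((Fin k → Bool) × Fin k) :=
    fun x => (Function.update x.1 x.2 (!(x.1 x.2)), x.2) with he
  have hinv : Function.Involutive e := by
    rintro ⟨σ, i⟩
    simp [he, Function.update_idem, Function.update_self, Bool.not_not,
      Function.update_eq_self]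
  refine Fintype.sum_bijective e hinv.bijective _ _ fun x => ?_
  obtain ⟨σ, i⟩ := x
  set σ' : Fin k → Bool := Function.update σ i (!(σ i)) with hσ'
  have h1 : σ' i = !(σ i) := Function.update_self i _ σ
  have h2 : Function.update σ' i (!(σ' i)) = σ := by
    rw [h1, Bool.not_not, hσ', Function.update_idem, Function.update_eq_self]
  have hiff : (g σ = a ∧ σ i = b ∧ g σ' ≠ g σ) ↔
      (g σ' = !a ∧ σ' i = !b ∧ g (Function.update σ' i (!(σ' i))) ≠ g σ') := by
    rw [h2, h1]
    constructor
    · rintro ⟨ha, hb, hne⟩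
      refine ⟨?_, by rw [hb], fun h => hne h.symm⟩
      have hne' : g σ' ≠ a := ha ▸ hne
      revert hne'; cases g σ' <;> cases a <;> decide
    · rintro ⟨ha, hb, hne⟩
      refine ⟨?_, Bool.not_inj hb, fun h => hne h.symm⟩
      have hne' : g σ ≠ !a := ha ▸ hne
      revert hne'; cases g σ <;> cases a <;> decide
  simp only [hF]
  by_cases h : g σ = a ∧ σ i = b ∧ g σ' ≠ g σ
  · rw [if_pos h, if_pos (hiff.mp h)]
    have hprod : (∏ j, ν (σ' j)) = ν (!(σ i)) * ∏ j ∈ Finset.univ \ {i}, ν (σ j) := by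
      have hfun : (fun j => ν (σ' j)) = Function.update (fun j => ν (σ j)) i (ν (!(σ i))) := by
        ext j
        by_cases hj : j = i
        · subst hj; simp [hσ']
        · simp [hσ', Function.update_of_ne hj]
      rw [show (∏ j, ν (σ' j)) = ∏ j, (fun j => ν (σ' j)) j from rfl, hfun,
        Finset.prod_update_of_mem (Finset.mem_univ i)]
    have hprod2 : (∏ j, ν (σ j)) = ν (σ i) * ∏ j ∈ Finset.univ \ {i}, ν (σ j) := by
      rw [Finset.sdiff_singleton_eq_erase]
      exact (Finset.mul_prod_erase _ _ (Finset.mem_univ i)).symm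
    rw [hprod, hprod2, h.2.1, inv_mul_cancel_left₀ (hν b), inv_mul_cancel_left₀ (hν (!b))]
  · rw [if_neg h, if_neg (fun hc => h (hiff.mpr hc))]
end

section
/- The function h(x) = x / (1 − e^{−x}(1 + x)) is convex on (0, ∞), tends to +∞ both as x → 0⁺ and as x → ∞, and attains its infimum over (0, ∞) at a unique point x* ∈ (0, ∞). -/
open Filter Set

noncomputable def dd (x : ℝ) : ℝ := 1 - Real.exp (-x) * (1 + x)
noncomputable def hh (x : ℝ) : ℝ := x / dd x
noncomputable def nn (x : ℝ) : ℝ := dd x - x ^ 2 * Real.exp (-x)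
noncomputable def hh1 (x : ℝ) : ℝ := nn x / dd x ^ 2
noncomputable def FF (x : ℝ) : ℝ := x - 3 + (x ^ 2 + 2 * x + 3) * Real.exp (-x)
noncomputable def hh2 (x : ℝ) : ℝ := x * Real.exp (-x) * FF x / dd x ^ 3

lemma exp_mul (x : ℝ) : Real.exp (-x) * Real.exp x = 1 := by
  rw [← Real.exp_add]; simp

lemma dd_pos {x : ℝ} (hx : 0 < x) : 0 < dd x := by
  have h := Real.add_one_lt_exp (ne_of_gt hx)
  have h2 := exp_mul x
  have h3 := Real.exp_pos (-x)
  unfold dd; nlinarith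

lemma dd_lt_one {x : ℝ} (hx : 0 < x) : dd x < 1 := by
  have h3 := Real.exp_pos (-x)
  unfold dd; nlinarith

lemma hasDerivAt_E (x : ℝ) :
    HasDerivAt (fun y : ℝ => Real.exp (-y)) (Real.exp (-x) * (-1)) x :=
  ((hasDerivAt_id x).neg).exp

lemma hasDerivAt_dd (x : ℝ) : HasDerivAt dd (x * Real.exp (-x)) x := by
  have h1 : HasDerivAt (fun y : ℝ => 1 + y) 1 x := by
    simpa using (hasDerivAt_id x).const_add (1 : ℝ)
  have h2 := ((hasDerivAt_E x).mul h1).const_sub (1 : ℝ)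
  exact h2.congr_deriv (by ring)

lemma hasDerivAt_nn (x : ℝ) :
    HasDerivAt nn ((x ^ 2 - x) * Real.exp (-x)) x := by
  have h1 : HasDerivAt (fun y : ℝ => y ^ 2 * Real.exp (-y))
      ((2 * x ^ 1) * Real.exp (-x) + x ^ 2 * (Real.exp (-x) * (-1))) x := by
    exact ((hasDerivAt_pow 2 x).mul (hasDerivAt_E x)).congr_deriv (by norm_num)
  have h2 := (hasDerivAt_dd x).sub h1
  exact h2.congr_deriv (by ring)

lemma hasDerivAt_FF (x : ℝ) :
    HasDerivAt FF (1 - (x ^ 2 + 1) * Real.exp (-x)) x := by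
  have h1 : HasDerivAt (fun y : ℝ => y - 3) 1 x := by
    simpa using (hasDerivAt_id x).sub_const (3 : ℝ)
  have h2 : HasDerivAt (fun y : ℝ => y ^ 2 + 2 * y + 3) (2 * x ^ 1 + 2) x := by
    simpa using ((hasDerivAt_pow 2 x).add ((hasDerivAt_id x).const_mul (2:ℝ))).add_const (3:ℝ)
  have h3 := h1.add (h2.mul (hasDerivAt_E x))
  exact h3.congr_deriv (by ring)

lemma sq_add_one_lt_exp {x : ℝ} (hx : 0 < x) : x ^ 2 + 1 < Real.exp x := by
  have h := Real.sum_le_exp_of_nonneg hx.le 4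
  norm_num [Finset.sum_range_succ, Nat.factorial] at h
  nlinarith [mul_nonneg hx.le (sq_nonneg (x - 3/2)), hx]

lemma FF_deriv_pos {x : ℝ} (hx : 0 < x) : 0 < 1 - (x ^ 2 + 1) * Real.exp (-x) := by
  have h := sq_add_one_lt_exp hx
  have h2 := exp_mul x
  have h3 := Real.exp_pos (-x)
  nlinarith

lemma FF_pos {x : ℝ} (hx : 0 < x) : 0 < FF x := by
  have hcont : ContinuousOn FF (Ici 0) :=
    fun y _ => ((hasDerivAt_FF y).continuousAt).continuousWithinAt
  have hmono : StrictMonoOn FF (Ici 0) := by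
    apply strictMonoOn_of_deriv_pos (convex_Ici 0) hcont
    intro y hy
    rw [interior_Ici] at hy
    rw [(hasDerivAt_FF y).deriv]
    exact FF_deriv_pos hy
  have h0 : FF 0 = 0 := by simp [FF]
  have := hmono (self_mem_Ici) (le_of_lt hx : (0:ℝ) ≤ x) hx
  rwa [h0] at this

lemma dd_le {x : ℝ} (hx : 0 < x) : dd x ≤ x ^ 2 / 2 := by
  set G : ℝ → ℝ := fun y => y ^ 2 / 2 - dd y with hG
  have hder : ∀ y : ℝ, HasDerivAt G (y - y * Real.exp (-y)) y := by
    intro y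
    have h1 : HasDerivAt (fun z : ℝ => z ^ 2 / 2) y y := by
      simpa using (hasDerivAt_pow 2 y).div_const 2
    have := h1.sub (hasDerivAt_dd y)
    exact this
  have hcont : ContinuousOn G (Ici 0) :=
    fun y _ => ((hder y).continuousAt).continuousWithinAt
  have hmono : MonotoneOn G (Ici 0) := by
    apply monotoneOn_of_deriv_nonneg (convex_Ici 0) hcont
    · intro y hy
      exact ((hder y).differentiableAt).differentiableWithinAt
    · intro y hy
      rw [interior_Ici] at hy
      have hy' : (0:ℝ) < y := hy
      rw [(hder y).deriv]
      have : Real.exp (-y) ≤ 1 := Real.exp_le_one_iff.mpr (by linarith)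
      nlinarith
  have h0 : G 0 = 0 := by simp [hG, dd]
  have := hmono (self_mem_Ici) (le_of_lt hx : (0:ℝ) ≤ x) hx.le
  rw [h0] at this
  simpa [hG] using this

lemma hasDerivAt_hh {x : ℝ} (hx : 0 < x) : HasDerivAt hh (hh1 x) x := by
  have h := (hasDerivAt_id x).div (hasDerivAt_dd x) (dd_pos hx).ne'
  refine h.congr_deriv (Eq.symm ?_)
  unfold hh1 nn
  simp only [id]
  field_simp

lemma hasDerivAt_hh1 {x : ℝ} (hx : 0 < x) : HasDerivAt hh1 (hh2 x) x := by
  have hd := (dd_pos hx).ne'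
  have h := (hasDerivAt_nn x).div ((hasDerivAt_dd x).pow 2) (pow_ne_zero 2 hd)
  refine h.congr_deriv (Eq.symm ?_)
  unfold hh2
  simp only [Pi.pow_apply]
  rw [div_eq_div_iff (pow_ne_zero 3 hd) (pow_ne_zero 2 (pow_ne_zero 2 hd))]
  unfold nn FF dd
  push_cast
  ring

lemma strictConvex_hh : StrictConvexOn ℝ (Ioi (0:ℝ)) hh := by
  apply strictConvexOn_of_deriv2_pos (convex_Ioi 0)
  · exact fun y hy => ((hasDerivAt_hh hy).continuousAt).continuousWithinAt
  · intro x hx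
    rw [interior_Ioi] at hx
    have heq : deriv (deriv hh) x = deriv hh1 x := by
      apply Filter.EventuallyEq.deriv_eq
      filter_upwards [isOpen_Ioi.mem_nhds hx] with y hy
      exact (hasDerivAt_hh hy).deriv
    have : deriv^[2] hh x = deriv (deriv hh) x := rfl
    rw [this, heq, (hasDerivAt_hh1 hx).deriv]
    unfold hh2
    apply div_pos
    · exact mul_pos (mul_pos hx (Real.exp_pos _)) (FF_pos hx)
    · exact pow_pos (dd_pos hx) 3

lemma tendsto_hh_zero : Tendsto hh (nhdsWithin 0 (Ioi (0:ℝ))) atTop := by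
  refine tendsto_atTop_mono' _ ?_ (Tendsto.const_mul_atTop (show (0:ℝ) < 2 by norm_num)
    tendsto_inv_nhdsGT_zero)
  filter_upwards [self_mem_nhdsWithin] with x hx
  have hx' : (0:ℝ) < x := hx
  have hd := dd_pos hx'
  have hle := dd_le hx'
  rw [show (2:ℝ) * x⁻¹ = 2 / x by ring]
  unfold hh
  rw [div_le_div_iff₀ hx' hd]
  nlinarith

lemma tendsto_hh_atTop : Tendsto hh atTop atTop := by
  refine tendsto_atTop_mono' _ ?_ tendsto_id
  filter_upwards [eventually_gt_atTop (0:ℝ)] with x hx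
  have hd := dd_pos hx
  have hlt := dd_lt_one hx
  simp only [id]
  unfold hh
  rw [le_div_iff₀ hd]
  nlinarith

lemma exists_min_hh : ∃ x0 ∈ Ioi (0:ℝ), ∀ y ∈ Ioi (0:ℝ), hh x0 ≤ hh y := by
  have hcont : ContinuousOn hh (Ioi 0) :=
    fun y hy => ((hasDerivAt_hh hy).continuousAt).continuousWithinAt
  obtain ⟨b, hb⟩ := eventually_atTop.mp (tendsto_hh_atTop.eventually_ge_atTop (hh 1))
  have h0 := tendsto_hh_zero.eventually_ge_atTop (hh 1)
  rw [eventually_nhdsWithin_iff] at h0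
  obtain ⟨ε, hε, hball⟩ := Metric.eventually_nhds_iff.mp h0
  set a : ℝ := min (ε / 2) 1 with ha
  have ha0 : 0 < a := lt_min (by linarith) one_pos
  have ha1 : a ≤ 1 := min_le_right _ _
  have haε : a < ε := lt_of_le_of_lt (min_le_left _ _) (by linarith)
  set B : ℝ := max b 1 with hB
  have hB1 : (1:ℝ) ≤ B := le_max_right _ _
  have hsub : Icc a B ⊆ Ioi (0:ℝ) := fun y hy => lt_of_lt_of_le ha0 hy.1
  obtain ⟨x0, hx0K, hx0min⟩ :=
    isCompact_Icc.exists_isMinOn ⟨1, ha1, hB1⟩ (hcont.mono hsub)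
  have hmin := isMinOn_iff.mp hx0min
  refine ⟨x0, hsub hx0K, fun y hy => ?_⟩
  have hy' : (0:ℝ) < y := hy
  have h1K : (1:ℝ) ∈ Icc a B := ⟨ha1, hB1⟩
  rcases lt_or_ge y a with hya | hya
  · have h1y : hh 1 ≤ hh y := by
      apply hball _ hy
      rw [Real.dist_eq, sub_zero, abs_of_pos hy']
      linarith
    exact le_trans (hmin 1 h1K) h1y
  · rcases le_or_gt y B with hyB | hyB
    · exact hmin y ⟨hya, hyB⟩
    · have h1y : hh 1 ≤ hh y :=
        hb y (le_trans (le_max_left b 1) hyB.le)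
      exact le_trans (hmin 1 h1K) h1y

/-- The function `h x = x / (1 - e^{-x} (1 + x))` is convex on `(0, ∞)`,
tends to `+∞` as `x → 0⁺` and as `x → ∞`, and attains its infimum over `(0, ∞)` at a
unique point. -/
theorem stmt_6 :
    ConvexOn ℝ (Set.Ioi (0 : ℝ)) (fun x => x / (1 - Real.exp (-x) * (1 + x))) ∧
    Tendsto (fun x => x / (1 - Real.exp (-x) * (1 + x)))
      (nhdsWithin 0 (Set.Ioi (0 : ℝ))) atTop ∧
    Tendsto (fun x => x / (1 - Real.exp (-x) * (1 + x))) atTop atTop ∧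
    (∃! xstar : ℝ, xstar ∈ Set.Ioi (0 : ℝ) ∧ ∀ y ∈ Set.Ioi (0 : ℝ),
      xstar / (1 - Real.exp (-xstar) * (1 + xstar)) ≤ y / (1 - Real.exp (-y) * (1 + y))) := by
  refine ⟨strictConvex_hh.convexOn, tendsto_hh_zero, tendsto_hh_atTop, ?_⟩
  obtain ⟨x0, hx0, hmin⟩ := exists_min_hh
  refine ⟨x0, ⟨hx0, hmin⟩, ?_⟩
  rintro y ⟨hy, hymin⟩
  exact strictConvex_hh.eq_of_isMinOn (isMinOn_iff.mpr hymin) (isMinOn_iff.mpr hmin) hy hx0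
end

section
/- Let λ_crit = inf_{x>0} x / (1 − e^{−x}(1 + x)) and let x* be the unique minimizer of x / (1 − e^{−x}(1 + x)) on (0, ∞). For λ = λ_crit, the equation 1 − e^{−λx}(1 + λx) = x has exactly two solutions x in [0,1], namely x = 0 and x = x*/λ_crit, and the latter lies in (0,1). -/
/-- Let `λ_crit = inf_{x>0} x / (1 - e^{-x}(1+x))` and let `x*` be the
unique minimizer of `x / (1 - e^{-x}(1+x))` on `(0, ∞)`. For `λ = λ_crit`, the equation
`1 - e^{-λx}(1 + λx) = x` has exactly two solutions in `[0,1]`, namely `x = 0` and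
`x = x*/λ_crit`, and the latter lies in `(0,1)`. -/
theorem stmt_8 (xstar : ℝ) (hxstar : xstar ∈ Set.Ioi (0 : ℝ))
    (hmin : ∀ y ∈ Set.Ioi (0 : ℝ),
      xstar / (1 - Real.exp (-xstar) * (1 + xstar)) ≤ y / (1 - Real.exp (-y) * (1 + y)))
    (huniq : ∀ z ∈ Set.Ioi (0 : ℝ),
      (∀ y ∈ Set.Ioi (0 : ℝ),
        z / (1 - Real.exp (-z) * (1 + z)) ≤ y / (1 - Real.exp (-y) * (1 + y))) → z = xstar) :
    xstar / sInf ((fun x => x / (1 - Real.exp (-x) * (1 + x))) '' Set.Ioi (0 : ℝ))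
        ∈ Set.Ioo (0 : ℝ) 1 ∧
    ∀ x ∈ Set.Icc (0 : ℝ) 1,
      (1 - Real.exp
            (-(sInf ((fun x => x / (1 - Real.exp (-x) * (1 + x))) '' Set.Ioi (0 : ℝ)) * x)) *
          (1 + sInf ((fun x => x / (1 - Real.exp (-x) * (1 + x))) '' Set.Ioi (0 : ℝ)) * x) = x
        ↔ x = 0 ∨
          x = xstar / sInf ((fun x => x / (1 - Real.exp (-x) * (1 + x))) '' Set.Ioi (0 : ℝ))) := by
  have hx0 : (0:ℝ) < xstar := hxstar
  have hden : ∀ y : ℝ, 0 < y → 0 < 1 - Real.exp (-y) * (1 + y) := by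
    intro y hy
    have h1 : 1 + y < Real.exp y := by have := Real.add_one_lt_exp (ne_of_gt hy); linarith
    have h2 : Real.exp (-y) * (1 + y) < Real.exp (-y) * Real.exp y :=
      mul_lt_mul_of_pos_left h1 (Real.exp_pos _)
    rw [← Real.exp_add, neg_add_cancel, Real.exp_zero] at h2
    linarith
  have hlam : sInf ((fun x => x / (1 - Real.exp (-x) * (1 + x))) '' Set.Ioi (0 : ℝ))
      = xstar / (1 - Real.exp (-xstar) * (1 + xstar)) := by
    apply IsLeast.csInf_eq
    exact ⟨⟨xstar, hxstar, rfl⟩, by rintro _ ⟨y, hy, rfl⟩; exact hmin y hy⟩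
  set lam := sInf ((fun x => x / (1 - Real.exp (-x) * (1 + x))) '' Set.Ioi (0 : ℝ)) with hlamdef
  have hd : 0 < 1 - Real.exp (-xstar) * (1 + xstar) := hden xstar hx0
  have hlampos : 0 < lam := by rw [hlam]; exact div_pos hx0 hd
  have hd1 : 1 - Real.exp (-xstar) * (1 + xstar) < 1 := by
    have h := Real.exp_pos (-xstar)
    nlinarith
  have hxl : xstar / lam = 1 - Real.exp (-xstar) * (1 + xstar) := by
    rw [hlam]
    field_simp
  constructor
  · exact ⟨div_pos hx0 hlampos, by rw [hxl]; exact hd1⟩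
  · intro x hx
    constructor
    · intro hfx
      rcases eq_or_lt_of_le hx.1 with h0 | hxpos
      · exact Or.inl h0.symm
      · right
        have hy : 0 < lam * x := mul_pos hlampos hxpos
        have hgy : (lam * x) / (1 - Real.exp (-(lam * x)) * (1 + lam * x)) = lam := by
          rw [hfx]
          field_simp
        have hmin' : ∀ y ∈ Set.Ioi (0:ℝ),
            (lam * x) / (1 - Real.exp (-(lam * x)) * (1 + lam * x))
              ≤ y / (1 - Real.exp (-y) * (1 + y)) := by
          intro y hy'
          rw [hgy, hlam]
          exact hmin y hy'
        have := huniq (lam * x) hy hmin'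
        field_simp
        linarith [this]
    · rintro (rfl | rfl)
      · simp
      · have hlx : lam * (xstar / lam) = xstar := by
          field_simp
        rw [hlx, hxl]
end

section
/- Let λ_crit = inf_{x>0} x / (1 − e^{−x}(1 + x)). If λ > λ_crit, then the equation 1 − e^{−λx}(1 + λx) = x has exactly three solutions x in [0,1]: x = 0 and two further solutions a < b, both lying in the open interval (0,1). -/
open Real Set

noncomputable def gAux (l x : ℝ) : ℝ := 1 - Real.exp (-(l * x)) * (1 + l * x) - x
noncomputable def hAux (l x : ℝ) : ℝ := l ^ 2 * x * Real.exp (-(l * x))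

lemma hasDerivAt_gAux (l x : ℝ) : HasDerivAt (gAux l) (hAux l x - 1) x := by
  have h1 : HasDerivAt (fun x : ℝ => l * x) l x := by
    simpa using (hasDerivAt_id x).const_mul l
  have h2 : HasDerivAt (fun x : ℝ => Real.exp (-(l * x))) (Real.exp (-(l * x)) * (-l)) x :=
    h1.neg.exp
  have h3 : HasDerivAt (fun x : ℝ => Real.exp (-(l * x)) * (1 + l * x))
      (Real.exp (-(l * x)) * (-l) * (1 + l * x) + Real.exp (-(l * x)) * l) x :=
    h2.mul (h1.const_add 1)
  have h4 := (h3.const_sub 1).sub (hasDerivAt_id x)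
  refine h4.congr_deriv ?_
  simp only [hAux]
  ring

lemma hasDerivAt_hAux (l x : ℝ) :
    HasDerivAt (hAux l) (l ^ 2 * Real.exp (-(l * x)) * (1 - l * x)) x := by
  have h1 : HasDerivAt (fun x : ℝ => l * x) l x := by
    simpa using (hasDerivAt_id x).const_mul l
  have h2 : HasDerivAt (fun x : ℝ => Real.exp (-(l * x))) (Real.exp (-(l * x)) * (-l)) x :=
    h1.neg.exp
  have h3 : HasDerivAt (fun x : ℝ => l ^ 2 * x) (l ^ 2) x := by
    simpa using (hasDerivAt_id x).const_mul (l ^ 2)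
  have h4 := h3.mul h2
  refine h4.congr_deriv ?_
  ring

lemma contgAux (l : ℝ) : Continuous (gAux l) :=
  Differentiable.continuous (fun x => (hasDerivAt_gAux l x).differentiableAt)

lemma conthAux (l : ℝ) : Continuous (hAux l) :=
  Differentiable.continuous (fun x => (hasDerivAt_hAux l x).differentiableAt)

lemma gAux_zero (l : ℝ) : gAux l 0 = 0 := by simp [gAux]

lemma xexp_le (t : ℝ) : t * Real.exp (-t) ≤ Real.exp (-1) := by
  have h1 : t ≤ Real.exp (t - 1) := by
    have := Real.add_one_le_exp (t - 1)
    linarith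
  have h2 : Real.exp (t - 1) * Real.exp (-t) = Real.exp (-1) := by
    rw [← Real.exp_add]; ring_nf
  calc t * Real.exp (-t) ≤ Real.exp (t - 1) * Real.exp (-t) :=
        mul_le_mul_of_nonneg_right h1 (Real.exp_pos _).le
    _ = Real.exp (-1) := h2

set_option maxHeartbeats 1000000 in
/-- Let `λ_crit = inf_{x>0} x / (1 - e^{-x}(1+x))`. If `λ > λ_crit`, then
the equation `1 - e^{-λx}(1 + λx) = x` has exactly three solutions in `[0,1]`: `x = 0`
and two further solutions `a < b`, both in the open interval `(0,1)`. -/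
theorem stmt_9 (lam : ℝ)
    (hlam : sInf ((fun x => x / (1 - Real.exp (-x) * (1 + x))) '' Set.Ioi (0 : ℝ)) < lam) :
    ∃ a b : ℝ, 0 < a ∧ a < b ∧ b < 1 ∧
      ∀ x ∈ Set.Icc (0 : ℝ) 1,
        (1 - Real.exp (-(lam * x)) * (1 + lam * x) = x ↔ x = 0 ∨ x = a ∨ x = b) := by
  have hne : ((fun x => x / (1 - Real.exp (-x) * (1 + x))) '' Set.Ioi (0 : ℝ)).Nonempty :=
    ⟨_, Set.mem_image_of_mem _ (by norm_num : (1 : ℝ) ∈ Set.Ioi 0)⟩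
  obtain ⟨v, hv, hvlt⟩ := exists_lt_of_csInf_lt hne hlam
  obtain ⟨x0, hx0, rfl⟩ := hv
  have hx0' : 0 < x0 := hx0
  have hden : 0 < 1 - Real.exp (-x0) * (1 + x0) := by
    have h1 : x0 + 1 < Real.exp x0 := Real.add_one_lt_exp (ne_of_gt hx0')
    have h2 : Real.exp (-x0) * (1 + x0) < 1 := by
      rw [Real.exp_neg, inv_mul_lt_iff₀ (Real.exp_pos x0)]
      linarith
    linarith
  have hlam0 : 0 < lam := lt_trans (div_pos hx0' hden) hvlt
  have hx0lam : x0 < lam * (1 - Real.exp (-x0) * (1 + x0)) := by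
    rwa [div_lt_iff₀ hden] at hvlt
  have hx0lt : x0 < lam := by
    have h3 : 0 < Real.exp (-x0) * (1 + x0) := by positivity
    nlinarith
  set y : ℝ := x0 / lam with hy
  have hy0 : 0 < y := div_pos hx0' hlam0
  have hy1 : y < 1 := (div_lt_one hlam0).mpr hx0lt
  have hlamy : lam * y = x0 := by rw [hy]; field_simp
  have hgy : 0 < gAux lam y := by
    simp only [gAux, hlamy]
    have h4 : x0 / lam < 1 - Real.exp (-x0) * (1 + x0) := (div_lt_iff₀ hlam0).mpr (by linarith)
    simp only [hy]; linarith
  have hexpprod : Real.exp 1 * Real.exp (-1) = 1 := by rw [← Real.exp_add]; norm_num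
  -- lam > e, via MVT
  have hlamE : Real.exp 1 < lam := by
    obtain ⟨c, hc, hceq⟩ := exists_hasDerivAt_eq_slope (gAux lam) (fun x => hAux lam x - 1) hy0
      (contgAux lam).continuousOn (fun x _ => hasDerivAt_gAux lam x)
    have hslope : 0 < (gAux lam y - gAux lam 0) / (y - 0) := by
      rw [gAux_zero]
      apply div_pos (by linarith) (by linarith)
    have hhc : 1 < hAux lam c := by
      rw [← sub_pos, hceq]; exact hslope
    have hkey : (lam * c) * Real.exp (-(lam * c)) ≤ Real.exp (-1) := xexp_le (lam * c)
    have hh : hAux lam c = lam * ((lam * c) * Real.exp (-(lam * c))) := by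
      simp only [hAux]; ring
    have h5 : 1 < lam * Real.exp (-1) := by
      calc 1 < hAux lam c := hhc
        _ = lam * ((lam * c) * Real.exp (-(lam * c))) := hh
        _ ≤ lam * Real.exp (-1) := mul_le_mul_of_nonneg_left hkey hlam0.le
    nlinarith [Real.exp_pos (-1), Real.exp_pos 1]
  have hlam1 : 1 < lam := by
    have := Real.add_one_le_exp (1 : ℝ)
    linarith
  have hinv1 : (1 : ℝ) / lam < 1 := by rw [div_lt_one hlam0]; exact hlam1
  have hinv0 : 0 < (1 : ℝ) / lam := by positivity
  -- h at the peak
  have hpeak : 1 < hAux lam (1 / lam) := by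
    have e1 : lam * (1 / lam) = 1 := by field_simp
    have e2 : hAux lam (1 / lam) = lam * Real.exp (-1) := by
      simp only [hAux, e1]
      field_simp
    rw [e2]
    nlinarith [Real.exp_pos (-1), Real.exp_pos 1]
  -- h at 1 is < 1, i.e. lam^2 < exp lam
  have hone : hAux lam 1 < 1 := by
    have ha : lam / 4 + 1 < Real.exp (lam / 4) :=
      Real.add_one_lt_exp (ne_of_gt (by positivity : (0 : ℝ) < lam / 4))
    have e3 : Real.exp (lam / 4) * Real.exp (lam / 4) = Real.exp (lam / 2) := by
      rw [← Real.exp_add]; ring_nf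
    have e4 : Real.exp (lam / 2) * Real.exp (lam / 2) = Real.exp lam := by
      rw [← Real.exp_add]; ring_nf
    have hsq : lam ≤ (1 + lam / 4) ^ 2 := by nlinarith [sq_nonneg (1 - lam / 4)]
    have hhalf : lam < Real.exp (lam / 2) := by
      nlinarith [Real.exp_pos (lam / 4)]
    have hlamsq : lam ^ 2 < Real.exp lam := by
      nlinarith [Real.exp_pos (lam / 2)]
    simp only [hAux, mul_one]
    have h10 : Real.exp (-lam) * Real.exp lam = 1 := by
      rw [← Real.exp_add]; norm_num
    nlinarith [Real.exp_pos (-lam)]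
  have hzero : hAux lam 0 = 0 := by simp [hAux]
  -- monotonicity of hAux
  have hmono : StrictMonoOn (hAux lam) (Set.Icc 0 (1 / lam)) := by
    apply strictMonoOn_of_deriv_pos (convex_Icc _ _) (conthAux lam).continuousOn
    intro x hx
    rw [interior_Icc] at hx
    rw [(hasDerivAt_hAux lam x).deriv]
    have h1 : 0 < 1 - lam * x := by
      have h2 := hx.2
      rw [lt_div_iff₀ hlam0] at h2
      linarith
    positivity
  have hanti : StrictAntiOn (hAux lam) (Set.Icc (1 / lam) 1) := by
    apply strictAntiOn_of_deriv_neg (convex_Icc _ _) (conthAux lam).continuousOn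
    intro x hx
    rw [interior_Icc] at hx
    rw [(hasDerivAt_hAux lam x).deriv]
    have h1 : 1 - lam * x < 0 := by
      have h2 := hx.1
      rw [div_lt_iff₀ hlam0] at h2
      linarith
    nlinarith [mul_pos (pow_pos hlam0 2) (Real.exp_pos (-(lam * x))), h1]
  -- get t1 and t2
  obtain ⟨t1, ht1mem, ht1⟩ : ∃ t1 ∈ Set.Ioo (0 : ℝ) (1 / lam), hAux lam t1 = 1 := by
    have h6 := intermediate_value_Ioo hinv0.le (conthAux lam).continuousOn
      (show (1 : ℝ) ∈ Set.Ioo (hAux lam 0) (hAux lam (1 / lam)) from by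
        rw [hzero]; exact ⟨one_pos, hpeak⟩)
    obtain ⟨t1, ht1m, ht1e⟩ := h6
    exact ⟨t1, ht1m, ht1e⟩
  obtain ⟨t2, ht2mem, ht2⟩ : ∃ t2 ∈ Set.Ioo (1 / lam) 1, hAux lam t2 = 1 := by
    have h6 := intermediate_value_Ioo' hinv1.le (conthAux lam).continuousOn
      (show (1 : ℝ) ∈ Set.Ioo (hAux lam 1) (hAux lam (1 / lam)) from ⟨hone, hpeak⟩)
    obtain ⟨t2, ht2m, ht2e⟩ := h6
    exact ⟨t2, ht2m, ht2e⟩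
  -- shape of gAux
  have ganti1 : StrictAntiOn (gAux lam) (Set.Icc 0 t1) := by
    apply strictAntiOn_of_deriv_neg (convex_Icc _ _) (contgAux lam).continuousOn
    intro x hx
    rw [interior_Icc] at hx
    rw [(hasDerivAt_gAux lam x).deriv]
    have h7 : hAux lam x < hAux lam t1 := hmono ⟨hx.1.le, (lt_trans hx.2 ht1mem.2).le⟩
      ⟨ht1mem.1.le, ht1mem.2.le⟩ hx.2
    rw [ht1] at h7; linarith
  have gmono : StrictMonoOn (gAux lam) (Set.Icc t1 t2) := by
    apply strictMonoOn_of_deriv_pos (convex_Icc _ _) (contgAux lam).continuousOn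
    intro x hx
    rw [interior_Icc] at hx
    rw [(hasDerivAt_gAux lam x).deriv]
    rcases le_or_gt x (1 / lam) with hcase | hcase
    · have h7 : hAux lam t1 < hAux lam x := hmono ⟨ht1mem.1.le, ht1mem.2.le⟩
        ⟨(lt_trans ht1mem.1 hx.1).le, hcase⟩ hx.1
      rw [ht1] at h7; linarith
    · have h7 : hAux lam t2 < hAux lam x := hanti ⟨hcase.le, (lt_trans hx.2 ht2mem.2).le⟩
        ⟨ht2mem.1.le, ht2mem.2.le⟩ hx.2
      rw [ht2] at h7; linarith
  have ganti2 : StrictAntiOn (gAux lam) (Set.Icc t2 1) := by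
    apply strictAntiOn_of_deriv_neg (convex_Icc _ _) (contgAux lam).continuousOn
    intro x hx
    rw [interior_Icc] at hx
    rw [(hasDerivAt_gAux lam x).deriv]
    have h7 : hAux lam x < hAux lam t2 := hanti ⟨ht2mem.1.le, ht2mem.2.le⟩
      ⟨(lt_trans ht2mem.1 hx.1).le, hx.2.le⟩ hx.1
    rw [ht2] at h7; linarith
  -- key sign facts
  have hgt1 : gAux lam t1 < 0 := by
    have h8 := ganti1 (Set.left_mem_Icc.mpr ht1mem.1.le) (Set.right_mem_Icc.mpr ht1mem.1.le)
      ht1mem.1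
    rwa [gAux_zero] at h8
  have hgt2 : 0 < gAux lam t2 := by
    rcases le_or_gt y t1 with hcase | hcase
    · exfalso
      have h8 := ganti1 (Set.left_mem_Icc.mpr ht1mem.1.le) ⟨hy0.le, hcase⟩ hy0
      rw [gAux_zero] at h8; linarith
    · rcases le_or_gt y t2 with hcase2 | hcase2
      · have h8 : gAux lam y ≤ gAux lam t2 := by
          rcases eq_or_lt_of_le hcase2 with he | hl
          · rw [he]
          · exact (gmono ⟨hcase.le, hcase2⟩
              ⟨(lt_trans ht1mem.2 ht2mem.1).le, le_refl _⟩ hl).le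
        linarith
      · have h8 : gAux lam y < gAux lam t2 := ganti2 (Set.left_mem_Icc.mpr ht2mem.2.le)
          ⟨hcase2.le, hy1.le⟩ hcase2
        linarith
  have hg1 : gAux lam 1 < 0 := by
    simp only [gAux]
    have h9 : 0 < Real.exp (-(lam * 1)) * (1 + lam * 1) := by positivity
    linarith
  -- obtain roots a and b
  obtain ⟨a, hamem, hga⟩ : ∃ a ∈ Set.Ioo t1 t2, gAux lam a = 0 := by
    have h6 := intermediate_value_Ioo (lt_trans ht1mem.2 ht2mem.1).le (contgAux lam).continuousOn
      (show (0 : ℝ) ∈ Set.Ioo (gAux lam t1) (gAux lam t2) from ⟨hgt1, hgt2⟩)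
    obtain ⟨a, ham, hae⟩ := h6
    exact ⟨a, ham, hae⟩
  obtain ⟨b, hbmem, hgb⟩ : ∃ b ∈ Set.Ioo t2 1, gAux lam b = 0 := by
    have h6 := intermediate_value_Ioo' ht2mem.2.le (contgAux lam).continuousOn
      (show (0 : ℝ) ∈ Set.Ioo (gAux lam 1) (gAux lam t2) from ⟨hg1, hgt2⟩)
    obtain ⟨b, hbm, hbe⟩ := h6
    exact ⟨b, hbm, hbe⟩
  refine ⟨a, b, lt_trans ht1mem.1 hamem.1, lt_trans hamem.2 hbmem.1, hbmem.2, ?_⟩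
  intro x hx
  have hiff : (1 - Real.exp (-(lam * x)) * (1 + lam * x) = x) ↔ gAux lam x = 0 := by
    simp only [gAux, sub_eq_zero]
  rw [hiff]
  constructor
  · intro hgx
    rcases eq_or_lt_of_le hx.1 with h0 | h0
    · exact Or.inl h0.symm
    rcases le_or_gt x t1 with hc1 | hc1
    · exfalso
      have h8 := ganti1 (Set.left_mem_Icc.mpr ht1mem.1.le) ⟨h0.le, hc1⟩ h0
      rw [gAux_zero, hgx] at h8; exact lt_irrefl _ h8
    rcases le_or_gt x t2 with hc2 | hc2
    · exact Or.inr (Or.inl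
        (gmono.injOn ⟨hc1.le, hc2⟩ ⟨hamem.1.le, hamem.2.le⟩ (by rw [hgx, hga])))
    · exact Or.inr (Or.inr
        (ganti2.injOn ⟨hc2.le, hx.2⟩ ⟨hbmem.1.le, hbmem.2.le⟩ (by rw [hgx, hgb])))
  · rintro (rfl | rfl | rfl)
    · exact gAux_zero lam
    · exact hga
    · exact hgb
end

section
/- Let λ_crit = inf_{x>0} x / (1 − e^{−x}(1 + x)), let λ > λ_crit, let Ψ_λ(x) = 1 − e^{−λx}(1 + λx), and let a < b be the two solutions of Ψ_λ(x) = x in (0,1). Then the derivative of Ψ_λ at the middle fixed point a satisfies Ψ_λ'(a) = λ² a e^{−λa} > 1. -/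
/-- Let `λ_crit = inf_{x>0} x / (1 - e^{-x}(1+x))`, let `λ > λ_crit`,
let `Ψ_λ(x) = 1 - e^{-λx}(1 + λx)`, and let `a < b` be the two fixed points of `Ψ_λ`
in `(0,1)`. Then `Ψ_λ'(a) = λ² a e^{-λa} > 1`. -/
theorem stmt_10 (lam a b : ℝ)
    (hlam : sInf ((fun x => x / (1 - Real.exp (-x) * (1 + x))) '' Set.Ioi (0 : ℝ)) < lam)
    (ha : a ∈ Set.Ioo (0 : ℝ) 1) (hb : b ∈ Set.Ioo (0 : ℝ) 1) (hab : a < b)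
    (hfa : 1 - Real.exp (-(lam * a)) * (1 + lam * a) = a)
    (hfb : 1 - Real.exp (-(lam * b)) * (1 + lam * b) = b) :
    HasDerivAt (fun x => 1 - Real.exp (-(lam * x)) * (1 + lam * x))
      (lam ^ 2 * a * Real.exp (-(lam * a))) a ∧
    1 < lam ^ 2 * a * Real.exp (-(lam * a)) := by
  obtain ⟨ha0, ha1⟩ := ha
  obtain ⟨hb0, hb1⟩ := hb
  -- derivative of Ψ
  have hPsi : ∀ x : ℝ, HasDerivAt (fun y => 1 - Real.exp (-(lam * y)) * (1 + lam * y))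
      (lam ^ 2 * x * Real.exp (-(lam * x))) x := by
    intro x
    have h1 : HasDerivAt (fun y : ℝ => -(lam * y)) (-lam) x := by
      simpa using ((hasDerivAt_id x).const_mul lam).fun_neg
    have h2 : HasDerivAt (fun y : ℝ => Real.exp (-(lam * y)))
        (Real.exp (-(lam * x)) * (-lam)) x := h1.exp
    have h3 : HasDerivAt (fun y : ℝ => 1 + lam * y) lam x := by
      simpa using ((hasDerivAt_id x).const_mul lam).const_add 1
    have h4 := (h2.fun_mul h3).const_sub 1
    exact h4.congr_deriv (by ring)
  -- F x = Ψ x - x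
  set F : ℝ → ℝ := fun x => (1 - Real.exp (-(lam * x)) * (1 + lam * x)) - x with hFdef
  have hF : ∀ x : ℝ, HasDerivAt F (lam ^ 2 * x * Real.exp (-(lam * x)) - 1) x :=
    fun x => (hPsi x).sub (hasDerivAt_id x)
  have hFcont : Continuous F :=
    (Differentiable.continuous fun x => (hF x).differentiableAt)
  have hF0 : F 0 = 0 := by simp [hFdef]
  have hFa : F a = 0 := by simp [hFdef, hfa]
  have hFb : F b = 0 := by simp [hFdef, hfb]
  -- Rolle on [0,a] and [a,b]
  obtain ⟨c, hc, hc1⟩ := exists_hasDerivAt_eq_zero ha0 hFcont.continuousOn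
    (hF0.trans hFa.symm) (fun x _ => hF x)
  obtain ⟨d, hd, hd1⟩ := exists_hasDerivAt_eq_zero hab hFcont.continuousOn
    (hFa.trans hFb.symm) (fun x _ => hF x)
  set g : ℝ → ℝ := fun x => lam ^ 2 * x * Real.exp (-(lam * x)) with hgdef
  have hgc : g c = 1 := by have := hc1; simp only [hgdef]; linarith
  have hgd : g d = 1 := by have := hd1; simp only [hgdef]; linarith
  refine ⟨hPsi a, ?_⟩
  -- derivative of g
  have hg' : ∀ x : ℝ, HasDerivAt g (lam ^ 2 * Real.exp (-(lam * x)) * (1 - lam * x)) x := by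
    intro x
    have h1 : HasDerivAt (fun y : ℝ => -(lam * y)) (-lam) x := by
      simpa using ((hasDerivAt_id x).const_mul lam).fun_neg
    have h2 : HasDerivAt (fun y : ℝ => Real.exp (-(lam * y)))
        (Real.exp (-(lam * x)) * (-lam)) x := h1.exp
    have h3 : HasDerivAt (fun y : ℝ => lam ^ 2 * y) (lam ^ 2) x := by
      simpa using (hasDerivAt_id x).const_mul (lam ^ 2)
    have h4 := h3.fun_mul h2
    exact h4.congr_deriv (by ring)
  have hgderiv : ∀ x : ℝ, deriv g x = lam ^ 2 * Real.exp (-(lam * x)) * (1 - lam * x) :=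
    fun x => (hg' x).deriv
  have hgcont : Continuous g := Differentiable.continuous fun x => (hg' x).differentiableAt
  have hlamne : lam ≠ 0 := by
    intro h
    rw [h] at hc1
    simp at hc1
  have hlampos : (0:ℝ) < lam ^ 2 := by positivity
  -- g strictly monotone where 1 - lam*x > 0, strictly antitone where 1 - lam*x < 0
  have hca : c < a := hc.2
  have had : a < d := hd.1
  have hc0 : 0 < c := hc.1
  by_cases hcase : lam * a ≤ 1
  · -- lam * x < 1 on (c, a) : if lam ≤ 0 trivially (x > 0), if lam > 0 since x < a
    have mono : StrictMonoOn g (Set.Icc c a) := by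
      apply strictMonoOn_of_deriv_pos (convex_Icc c a) hgcont.continuousOn
      intro x hx
      rw [interior_Icc] at hx
      rw [hgderiv]
      have hxpos : 0 < x := lt_trans hc0 hx.1
      have : lam * x < 1 := by
        rcases le_or_gt lam 0 with h | h
        · nlinarith
        · nlinarith [hx.2]
      exact mul_pos (mul_pos hlampos (Real.exp_pos _)) (by linarith)
    have := mono (Set.left_mem_Icc.mpr hca.le) (Set.right_mem_Icc.mpr hca.le) hca
    rw [hgc] at this
    simpa [hgdef] using this
  · push_neg at hcase
    have hlampos' : 0 < lam := by nlinarith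
    -- lam * x > 1 on (a, d), so g strictly antitone on [a, d]
    have anti : StrictAntiOn g (Set.Icc a d) := by
      apply strictAntiOn_of_deriv_neg (convex_Icc a d) hgcont.continuousOn
      intro x hx
      rw [interior_Icc] at hx
      rw [hgderiv]
      have : 1 < lam * x := by nlinarith [hx.1]
      exact mul_neg_of_pos_of_neg (mul_pos hlampos (Real.exp_pos _)) (by linarith)
    have := anti (Set.left_mem_Icc.mpr had.le) (Set.right_mem_Icc.mpr had.le) had
    rw [hgd] at this
    simpa [hgdef] using this
end

section
/- Let λ > 0 and let x ∈ (0,1) satisfy x = e^{−λx}. Then λ·e^{−λx} > 1 if and only if λ > e (equivalently, λ·e^{−λx} ≤ 1 if and only if λ ≤ e). -/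
/-- Let `λ > 0` and `x ∈ (0,1)` with `x = e^{-λx}`. Then
`λ e^{-λx} > 1 ↔ λ > e`, and equivalently `λ e^{-λx} ≤ 1 ↔ λ ≤ e`. -/
theorem stmt_14 (lam x : ℝ) (hlam : 0 < lam) (hx : x ∈ Set.Ioo (0 : ℝ) 1)
    (hfix : x = Real.exp (-(lam * x))) :
    (1 < lam * Real.exp (-(lam * x)) ↔ Real.exp 1 < lam) ∧
    (lam * Real.exp (-(lam * x)) ≤ 1 ↔ lam ≤ Real.exp 1) := by
  obtain ⟨hx0, hx1⟩ := hx
  set t := lam * x with ht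
  have ht0 : 0 < t := mul_pos hlam hx0
  have hex : Real.exp (-t) = x := hfix.symm
  have hlx : lam * Real.exp (-t) = t := by rw [hex]
  have hlam_eq : lam = t * Real.exp t := by
    have h1 : x * Real.exp t = 1 := by
      rw [← hex, ← Real.exp_add]; simp
    have : lam * (x * Real.exp t) = lam := by rw [h1, mul_one]
    calc lam = lam * (x * Real.exp t) := this.symm
      _ = (lam * x) * Real.exp t := by ring
  have key : 1 < t ↔ Real.exp 1 < lam := by
    rw [hlam_eq]
    constructor
    · intro h
      calc Real.exp 1 = 1 * Real.exp 1 := (one_mul _).symm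
        _ < t * Real.exp t := by
            apply mul_lt_mul h (Real.exp_le_exp.2 h.le) (Real.exp_pos 1) ht0.le
    · intro h
      by_contra hle
      push_neg at hle
      have : t * Real.exp t ≤ 1 * Real.exp 1 :=
        mul_le_mul hle (Real.exp_le_exp.2 hle) (Real.exp_pos t).le zero_le_one
      rw [one_mul] at this
      exact absurd h (not_lt.2 this)
  rw [hlx]
  exact ⟨key, by rw [← not_lt, ← not_lt, key]⟩
end

section
/- For λ > 0 let Ψ_λ(x) = 1 − e^{−λ(1−x)} − e^{−λx} + e^{−λ}. (i) If λ(1 − e^{−λ}) ≤ 1, then x = 0 is the only solution of Ψ_λ(x) = x in [0,1]. (ii) If λ(1 − e^{−λ}) > 1, then Ψ_λ(x) = x has exactly two solutions in [0,1]: x = 0 and one further solution lying in the open interval (0,1). -/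
open Real Set

noncomputable def stmt15g (lam x : ℝ) : ℝ :=
  1 - Real.exp (-(lam * (1 - x))) - Real.exp (-(lam * x)) + Real.exp (-lam) - x

noncomputable def stmt15D (lam x : ℝ) : ℝ :=
  lam * Real.exp (-(lam * x)) - lam * Real.exp (-(lam * (1 - x))) - 1

lemma stmt15_hasDerivAt (lam x : ℝ) : HasDerivAt (stmt15g lam) (stmt15D lam x) x := by
  have hu : HasDerivAt (fun y : ℝ => -(lam * (1 - y))) lam x := by
    simpa [Pi.neg_def] using (((hasDerivAt_const x (1:ℝ)).sub (hasDerivAt_id x)).const_mul lam).neg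
  have hv : HasDerivAt (fun y : ℝ => -(lam * y)) (-lam) x := by
    simpa [Pi.neg_def] using ((hasDerivAt_id x).const_mul lam).neg
  have h1 := hu.exp
  have h2 := hv.exp
  have : HasDerivAt (stmt15g lam)
      (0 - (Real.exp (-(lam * (1 - x))) * lam) - (Real.exp (-(lam * x)) * (-lam)) + 0 - 1) x := by
    exact ((((hasDerivAt_const x (1:ℝ)).sub h1).sub h2).add (hasDerivAt_const x (Real.exp (-lam)))).sub (hasDerivAt_id x)
  convert this using 1
  simp [stmt15D]; ring

lemma stmt15_strictAntiD (lam : ℝ) (hlam : 0 < lam) : StrictAnti (stmt15D lam) := by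
  intro a b hab
  have h1 : Real.exp (-(lam * b)) < Real.exp (-(lam * a)) := by
    apply Real.exp_lt_exp.2; nlinarith
  have h2 : Real.exp (-(lam * (1 - a))) < Real.exp (-(lam * (1 - b))) := by
    apply Real.exp_lt_exp.2; nlinarith
  unfold stmt15D; nlinarith

lemma stmt15_contD (lam : ℝ) : Continuous (stmt15D lam) := by
  unfold stmt15D; fun_prop

lemma stmt15_contg (lam : ℝ) : Continuous (stmt15g lam) :=
  continuous_iff_continuousAt.2 fun y => (stmt15_hasDerivAt lam y).continuousAt

lemma stmt15_g0 (lam : ℝ) : stmt15g lam 0 = 0 := by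
  simp [stmt15g]

lemma stmt15_g1 (lam : ℝ) : stmt15g lam 1 = -1 := by
  simp [stmt15g]

/-- For `λ > 0` let `Ψ_λ(x) = 1 - e^{-λ(1-x)} - e^{-λx} + e^{-λ}`.
(i) If `λ(1 - e^{-λ}) ≤ 1`, then `x = 0` is the only solution of `Ψ_λ(x) = x` in `[0,1]`.
(ii) If `λ(1 - e^{-λ}) > 1`, then `Ψ_λ(x) = x` has exactly two solutions in `[0,1]`:
`x = 0` and one further solution in `(0,1)`. -/
theorem stmt_15 (lam : ℝ) (hlam : 0 < lam) :
    (lam * (1 - Real.exp (-lam)) ≤ 1 →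
      ∀ x ∈ Set.Icc (0 : ℝ) 1,
        1 - Real.exp (-(lam * (1 - x))) - Real.exp (-(lam * x)) + Real.exp (-lam) = x →
          x = 0) ∧
    (1 < lam * (1 - Real.exp (-lam)) →
      ∃ q ∈ Set.Ioo (0 : ℝ) 1, ∀ x ∈ Set.Icc (0 : ℝ) 1,
        (1 - Real.exp (-(lam * (1 - x))) - Real.exp (-(lam * x)) + Real.exp (-lam) = x ↔
          x = 0 ∨ x = q)) := by
  have hD0 : stmt15D lam 0 = lam * (1 - Real.exp (-lam)) - 1 := by
    simp [stmt15D]; ring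
  have hderiv : ∀ x : ℝ, deriv (stmt15g lam) x = stmt15D lam x :=
    fun x => (stmt15_hasDerivAt lam x).deriv
  have hcont : Continuous (stmt15g lam) := stmt15_contg lam
  have hanti := stmt15_strictAntiD lam hlam
  have geq : ∀ x : ℝ,
      (1 - Real.exp (-(lam * (1 - x))) - Real.exp (-(lam * x)) + Real.exp (-lam) = x)
        ↔ stmt15g lam x = 0 := by
    intro x; unfold stmt15g; constructor <;> intro h <;> linarith
  constructor
  · intro hle x hx heq
    rw [geq] at heq
    by_contra hx0
    have hxpos : 0 < x := lt_of_le_of_ne hx.1 (Ne.symm hx0)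
    have hgan : StrictAntiOn (stmt15g lam) (Icc 0 1) := by
      apply strictAntiOn_of_deriv_neg (convex_Icc 0 1) hcont.continuousOn
      intro y hy
      rw [interior_Icc] at hy
      rw [hderiv]
      have : stmt15D lam y < stmt15D lam 0 := hanti hy.1
      have : stmt15D lam 0 ≤ 0 := by rw [hD0]; linarith
      linarith [hanti hy.1]
    have := hgan (left_mem_Icc.2 zero_le_one) hx hxpos
    rw [stmt15_g0, heq] at this
    exact lt_irrefl 0 this
  · intro hgt
    have hD0pos : 0 < stmt15D lam 0 := by rw [hD0]; linarith
    have hD1neg : stmt15D lam 1 < 0 := by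
      have h1 : Real.exp (-lam) < 1 := Real.exp_lt_one_iff.2 (by linarith)
      unfold stmt15D
      simp only [mul_one, sub_self, mul_zero, neg_zero, Real.exp_zero]
      nlinarith
    -- find c with D c = 0
    obtain ⟨c, hc, hDc⟩ : ∃ c ∈ Ioo (0:ℝ) 1, stmt15D lam c = 0 := by
      have := intermediate_value_Ioo' (le_of_lt one_pos) (stmt15_contD lam).continuousOn
        (a := 0) (b := 1)
      have h0 : (0:ℝ) ∈ Ioo (stmt15D lam 1) (stmt15D lam 0) := ⟨hD1neg, hD0pos⟩
      obtain ⟨c, hc, hDc⟩ := this h0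
      exact ⟨c, hc, hDc⟩
    have hmono : StrictMonoOn (stmt15g lam) (Icc 0 c) := by
      apply strictMonoOn_of_deriv_pos (convex_Icc 0 c) hcont.continuousOn
      intro y hy
      rw [interior_Icc] at hy
      rw [hderiv]
      have := hanti hy.2
      linarith [hanti hy.2, hDc]
    have hantig : StrictAntiOn (stmt15g lam) (Icc c 1) := by
      apply strictAntiOn_of_deriv_neg (convex_Icc c 1) hcont.continuousOn
      intro y hy
      rw [interior_Icc] at hy
      rw [hderiv]
      linarith [hanti hy.1, hDc]
    have hgc : 0 < stmt15g lam c := by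
      have := hmono (left_mem_Icc.2 (le_of_lt hc.1)) (right_mem_Icc.2 (le_of_lt hc.1)) hc.1
      rwa [stmt15_g0] at this
    -- root q in (c,1)
    obtain ⟨q, hq, hgq⟩ : ∃ q ∈ Ioo c 1, stmt15g lam q = 0 := by
      have := intermediate_value_Ioo' (le_of_lt hc.2) hcont.continuousOn (a := c) (b := 1)
      have h0 : (0:ℝ) ∈ Ioo (stmt15g lam 1) (stmt15g lam c) := by
        rw [stmt15_g1]; exact ⟨by norm_num, hgc⟩
      obtain ⟨q, hq, hgq⟩ := this h0
      exact ⟨q, hq, hgq⟩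
    refine ⟨q, ⟨lt_trans hc.1 hq.1, hq.2⟩, ?_⟩
    intro x hx
    rw [geq]
    constructor
    · intro hgx
      by_cases hx0 : x = 0
      · exact Or.inl hx0
      right
      have hxpos : 0 < x := lt_of_le_of_ne hx.1 (Ne.symm hx0)
      by_cases hxc : x ≤ c
      · exfalso
        have := hmono (left_mem_Icc.2 (le_of_lt hc.1)) ⟨le_of_lt hxpos, hxc⟩ hxpos
        rw [stmt15_g0, hgx] at this
        exact lt_irrefl 0 this
      · push_neg at hxc
        have hxm : x ∈ Icc c 1 := ⟨le_of_lt hxc, hx.2⟩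
        have hqm : q ∈ Icc c 1 := ⟨le_of_lt hq.1, le_of_lt hq.2⟩
        exact hantig.injOn hxm hqm (by rw [hgx, hgq])
    · rintro (rfl | rfl)
      · exact stmt15_g0 lam
      · exact hgq
end

section
/- Let A : ℕ × ℕ → {0,1} be a monotone two-colour tree automaton, i.e. A(n₀ + 1, n₁) ≤ A(n₀, n₁ + 1) for all n₀, n₁, and let χ be a probability mass function on ℕ with finite mean ∑_k k·χ(k) < ∞. Define the automaton distribution map Ψ : [0,1] → [0,1] by Ψ(x) = ∑_{k≥0} χ(k) ∑_{j=0}^{k} C(k,j) x^j (1−x)^{k−j} A(k−j, j), and define the expected number of pivotal children at parameter x by Π(x) = ∑_{k≥0} χ(k) ∑_{j=0}^{k} C(k,j) x^j (1−x)^{k−j} · [ j·1{A(k−j, j) ≠ A(k−j+1, j−1)} + (k−j)·1{A(k−j, j) ≠ A(k−j−1, j+1)} ]. Then Ψ is differentiable on (0,1) and Ψ'(x) = Π(x) for every x ∈ (0,1). -/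
open Finset

/-- The automaton distribution map `Ψ` of a two-colour tree automaton `A` with child
distribution `χ`: the probability that the parent gets colour 1 when the number of
children is sampled from `χ` and each child is independently coloured 1 with
probability `x`. Here `A n₀ n₁` is the parent colour for `n₀` children of colour 0
and `n₁` children of colour 1. -/
noncomputable def autoPsi (A : ℕ → ℕ → Bool) (χ : ℕ → ℝ) (x : ℝ) : ℝ :=
  ∑' k : ℕ, χ k * ∑ j ∈ Finset.range (k + 1),
    (k.choose j : ℝ) * x ^ j * (1 - x) ^ (k - j) * (if A (k - j) j then 1 else 0)

/-- The expected number of pivotal children at parameter `x`: a colour-1 child is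
pivotal if switching it to colour 0 changes the parent's colour, and symmetrically
for colour-0 children. -/
noncomputable def autoPivMean (A : ℕ → ℕ → Bool) (χ : ℕ → ℝ) (x : ℝ) : ℝ :=
  ∑' k : ℕ, χ k * ∑ j ∈ Finset.range (k + 1),
    (k.choose j : ℝ) * x ^ j * (1 - x) ^ (k - j) *
      ((j : ℝ) * (if A (k - j) j ≠ A (k - j + 1) (j - 1) then 1 else 0) +
        ((k - j : ℕ) : ℝ) * (if A (k - j) j ≠ A (k - j - 1) (j + 1) then 1 else 0))


/- ## Auxiliary lemmas -/

private lemma bool_ind_one {p q : Bool} (h : q ≤ p) :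
    (if p ≠ q then (1:ℝ) else 0) = (if p then (1:ℝ) else 0) - (if q then (1:ℝ) else 0) := by
  cases p <;> cases q
  · simp
  · exact absurd h (by decide)
  · simp
  · simp

private lemma bool_ind_one' {p q : Bool} (h : q ≤ p) :
    (if q ≠ p then (1:ℝ) else 0) = (if p then (1:ℝ) else 0) - (if q then (1:ℝ) else 0) := by
  cases p <;> cases q
  · simp
  · exact absurd h (by decide)
  · simp
  · simp

private lemma cast_mul_pow (y : ℝ) (m : ℕ) : (m:ℝ) * y ^ m = (m:ℝ) * (y * y ^ (m-1)) := by
  cases m with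
  | zero => simp
  | succ n => rw [Nat.add_sub_cancel, pow_succ']

private lemma choose_cast (k i : ℕ) :
    ((k.choose (i+1)):ℝ) * ((i:ℝ)+1) = ((k.choose i):ℝ) * ((k-i:ℕ):ℝ) := by
  exact_mod_cast congrArg (Nat.cast : ℕ → ℝ) (Nat.choose_succ_right_eq k i)

private lemma binom_sum_one (y : ℝ) (k : ℕ) :
    ∑ j ∈ range (k+1), (k.choose j : ℝ) * y ^ j * (1-y) ^ (k-j) = 1 := by
  have h := add_pow y (1 - y) k
  rw [show y + (1 - y) = (1:ℝ) by ring, one_pow] at h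
  calc ∑ j ∈ range (k+1), (k.choose j : ℝ) * y ^ j * (1-y) ^ (k-j)
      = ∑ j ∈ range (k+1), y ^ j * (1-y) ^ (k-j) * (k.choose j : ℝ) :=
        Finset.sum_congr rfl fun j _ => by ring
    _ = 1 := h.symm

/-- The key algebraic (Margulis–Russo) identity for an arbitrary sequence `b`. -/
private lemma key_identity (k : ℕ) (b : ℕ → ℝ) (x : ℝ) :
    ∑ j ∈ range (k+1), (k.choose j : ℝ) * x ^ j * (1-x) ^ (k-j) *
        ((j:ℝ) * (b j - b (j-1)) + ((k-j:ℕ):ℝ) * (b (j+1) - b j))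
    = ∑ j ∈ range (k+1), (k.choose j : ℝ) * b j *
        ((j:ℝ) * x ^ (j-1) * (1-x) ^ (k-j) - ((k-j:ℕ):ℝ) * x ^ j * (1-x) ^ (k-j-1)) := by
  set S1 := ∑ j ∈ range (k+1), (k.choose j : ℝ) * (j:ℝ) * x ^ (j-1) * (1-x) ^ (k-j) * b j with hS1
  set S2 := ∑ j ∈ range (k+1),
      (k.choose j : ℝ) * ((k-j:ℕ):ℝ) * x ^ j * (1-x) ^ (k-j-1) * b j with hS2
  have hA1 : ∑ j ∈ range (k+1), (k.choose j : ℝ) * (j:ℝ) * x ^ j * (1-x) ^ (k-j) * b j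
      = x * S1 := by
    rw [hS1, Finset.mul_sum]
    refine Finset.sum_congr rfl fun j _ => ?_
    have h := cast_mul_pow x j
    linear_combination ((k.choose j : ℝ) * (1-x) ^ (k-j) * b j) * h
  have hA2 : ∑ j ∈ range (k+1), (k.choose j : ℝ) * (j:ℝ) * x ^ j * (1-x) ^ (k-j) * b (j-1)
      = x * S2 := by
    rw [hS2, Finset.mul_sum, Finset.sum_range_succ', Finset.sum_range_succ]
    simp only [Nat.cast_zero, Nat.sub_self, Nat.cast_ofNat]
    norm_num
    refine Finset.sum_congr rfl fun i hi => ?_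
    have hc := choose_cast k i
    have he : k - (i+1) = k - i - 1 := by omega
    rw [he]
    linear_combination (x ^ (i+1) * (1-x) ^ (k-i-1) * b i) * hc
  have hA3 : ∑ j ∈ range (k+1), (k.choose j : ℝ) * ((k-j:ℕ):ℝ) * x ^ j * (1-x) ^ (k-j) * b (j+1)
      = (1-x) * S1 := by
    rw [hS1, Finset.mul_sum, Finset.sum_range_succ, Finset.sum_range_succ']
    simp only [Nat.sub_self, Nat.cast_zero, Nat.cast_ofNat]
    norm_num
    refine Finset.sum_congr rfl fun i hi => ?_
    have hik : i < k := Finset.mem_range.mp hi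
    have hc := choose_cast k i
    have he : k - (i+1) = k - i - 1 := by omega
    have hp : (1-x) ^ (k-i) = (1-x) * (1-x) ^ (k-i-1) := by
      rw [← pow_succ']
      congr 1
      omega
    rw [he, hp]
    linear_combination (-(x ^ i * (1-x) * (1-x) ^ (k-i-1) * b (i+1))) * hc
  have hA4 : ∑ j ∈ range (k+1), (k.choose j : ℝ) * ((k-j:ℕ):ℝ) * x ^ j * (1-x) ^ (k-j) * b j
      = (1-x) * S2 := by
    rw [hS2, Finset.mul_sum]
    refine Finset.sum_congr rfl fun j _ => ?_
    have h := cast_mul_pow (1-x) (k-j)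
    linear_combination ((k.choose j : ℝ) * x ^ j * b j) * h
  have hsplit : ∑ j ∈ range (k+1), (k.choose j : ℝ) * x ^ j * (1-x) ^ (k-j) *
        ((j:ℝ) * (b j - b (j-1)) + ((k-j:ℕ):ℝ) * (b (j+1) - b j))
      = ((∑ j ∈ range (k+1), (k.choose j : ℝ) * (j:ℝ) * x ^ j * (1-x) ^ (k-j) * b j)
          - ∑ j ∈ range (k+1), (k.choose j : ℝ) * (j:ℝ) * x ^ j * (1-x) ^ (k-j) * b (j-1))
        + ((∑ j ∈ range (k+1), (k.choose j : ℝ) * ((k-j:ℕ):ℝ) * x ^ j * (1-x) ^ (k-j) * b (j+1))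
          - ∑ j ∈ range (k+1), (k.choose j : ℝ) * ((k-j:ℕ):ℝ) * x ^ j * (1-x) ^ (k-j) * b j) := by
    rw [← Finset.sum_sub_distrib, ← Finset.sum_sub_distrib, ← Finset.sum_add_distrib]
    exact Finset.sum_congr rfl fun j _ => by ring
  have hRHS : ∑ j ∈ range (k+1), (k.choose j : ℝ) * b j *
        ((j:ℝ) * x ^ (j-1) * (1-x) ^ (k-j) - ((k-j:ℕ):ℝ) * x ^ j * (1-x) ^ (k-j-1))
      = S1 - S2 := by
    rw [hS1, hS2, ← Finset.sum_sub_distrib]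
    exact Finset.sum_congr rfl fun j _ => by ring
  rw [hsplit, hA1, hA2, hA3, hA4, hRHS]
  ring

private lemma inner_hasDerivAt (k : ℕ) (b : ℕ → ℝ) (x : ℝ) :
    HasDerivAt
      (fun y : ℝ => ∑ j ∈ range (k+1), (k.choose j : ℝ) * y ^ j * (1-y) ^ (k-j) * b j)
      (∑ j ∈ range (k+1), (k.choose j : ℝ) * b j *
        ((j:ℝ) * x ^ (j-1) * (1-x) ^ (k-j) - ((k-j:ℕ):ℝ) * x ^ j * (1-x) ^ (k-j-1))) x := by
  refine HasDerivAt.fun_sum fun j _ => ?_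
  have h0 : HasDerivAt (fun y : ℝ => 1 - y) (-1) x := (hasDerivAt_id x).const_sub 1
  have h2 := h0.fun_pow (n := k - j)
  have h1 := hasDerivAt_pow j x
  have hm := ((h1.fun_mul h2).const_mul ((k.choose j : ℝ))).mul_const (b j)
  have hfe : (fun y : ℝ => (k.choose j : ℝ) * y ^ j * (1-y) ^ (k-j) * b j)
      = fun y : ℝ => ((k.choose j : ℝ) * (y ^ j * (1-y) ^ (k-j))) * b j := by
    funext y; ring
  rw [hfe]
  convert hm using 1
  rfl
  ring

private lemma ind_eq (A : ℕ → ℕ → Bool) (hA : ∀ n₀ n₁, A (n₀ + 1) n₁ ≤ A n₀ (n₁ + 1))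
    (k j : ℕ) (hj : j ≤ k) :
    (j : ℝ) * (if A (k - j) j ≠ A (k - j + 1) (j - 1) then 1 else 0)
    = (j : ℝ) * ((if A (k - j) j then (1:ℝ) else 0)
        - (if A (k - (j - 1)) (j - 1) then (1:ℝ) else 0)) := by
  cases j with
  | zero => simp
  | succ n =>
    have h : k - (n+1) + 1 = k - n := by omega
    have hle := hA (k - (n+1)) n
    rw [show k - (n+1) + 1 = k - n by omega] at hle
    simp only [Nat.add_sub_cancel, h]
    rw [bool_ind_one hle]

private lemma ind_eq2 (A : ℕ → ℕ → Bool) (hA : ∀ n₀ n₁, A (n₀ + 1) n₁ ≤ A n₀ (n₁ + 1))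
    (k j : ℕ) (hj : j ≤ k) :
    ((k - j : ℕ) : ℝ) * (if A (k - j) j ≠ A (k - j - 1) (j + 1) then 1 else 0)
    = ((k - j : ℕ) : ℝ) * ((if A (k - (j + 1)) (j + 1) then (1:ℝ) else 0)
        - (if A (k - j) j then (1:ℝ) else 0)) := by
  rcases eq_or_lt_of_le hj with rfl | hlt
  · simp
  · have h : k - j - 1 = k - (j + 1) := by omega
    have hle := hA (k - j - 1) j
    rw [show k - j - 1 + 1 = k - j by omega] at hle
    rw [h] at hle ⊢
    rw [bool_ind_one' hle]

private lemma weight_mem (A : ℕ → ℕ → Bool) (k j : ℕ) (hj : j ≤ k) :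
    0 ≤ (j:ℝ) * (if A (k-j) j ≠ A (k-j+1) (j-1) then (1:ℝ) else 0) +
        ((k-j:ℕ):ℝ) * (if A (k-j) j ≠ A (k-j-1) (j+1) then (1:ℝ) else 0) ∧
    (j:ℝ) * (if A (k-j) j ≠ A (k-j+1) (j-1) then (1:ℝ) else 0) +
        ((k-j:ℕ):ℝ) * (if A (k-j) j ≠ A (k-j-1) (j+1) then (1:ℝ) else 0) ≤ (k:ℝ) := by
  have hkj : ((k-j:ℕ):ℝ) = (k:ℝ) - (j:ℝ) := by
    rw [Nat.cast_sub hj]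
  have e1 : (0:ℝ) ≤ (if A (k-j) j ≠ A (k-j+1) (j-1) then (1:ℝ) else 0) := by
    split <;> norm_num
  have e2 : (if A (k-j) j ≠ A (k-j+1) (j-1) then (1:ℝ) else 0) ≤ 1 := by
    split <;> norm_num
  have e3 : (0:ℝ) ≤ (if A (k-j) j ≠ A (k-j-1) (j+1) then (1:ℝ) else 0) := by
    split <;> norm_num
  have e4 : (if A (k-j) j ≠ A (k-j-1) (j+1) then (1:ℝ) else 0) ≤ 1 := by
    split <;> norm_num
  have hj0 : (0:ℝ) ≤ (j:ℝ) := Nat.cast_nonneg j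
  have hk0 : (0:ℝ) ≤ ((k-j:ℕ):ℝ) := Nat.cast_nonneg _
  refine ⟨add_nonneg (mul_nonneg hj0 e1) (mul_nonneg hk0 e3), ?_⟩
  have b1 : (j:ℝ) * (if A (k-j) j ≠ A (k-j+1) (j-1) then (1:ℝ) else 0) ≤ (j:ℝ) :=
    mul_le_of_le_one_right hj0 e2
  have b2 : ((k-j:ℕ):ℝ) * (if A (k-j) j ≠ A (k-j-1) (j+1) then (1:ℝ) else 0) ≤ ((k-j:ℕ):ℝ) :=
    mul_le_of_le_one_right hk0 e4
  linarith [b1, b2, hkj.le, hkj.ge]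

/-- The summand functions. -/
private noncomputable def myF (A : ℕ → ℕ → Bool) (χ : ℕ → ℝ) (k : ℕ) (y : ℝ) : ℝ :=
  χ k * ∑ j ∈ Finset.range (k + 1),
    (k.choose j : ℝ) * y ^ j * (1 - y) ^ (k - j) * (if A (k - j) j then 1 else 0)

private noncomputable def myF' (A : ℕ → ℕ → Bool) (χ : ℕ → ℝ) (k : ℕ) (y : ℝ) : ℝ :=
  χ k * ∑ j ∈ Finset.range (k + 1),
    (k.choose j : ℝ) * y ^ j * (1 - y) ^ (k - j) *
      ((j : ℝ) * (if A (k - j) j ≠ A (k - j + 1) (j - 1) then 1 else 0) +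
        ((k - j : ℕ) : ℝ) * (if A (k - j) j ≠ A (k - j - 1) (j + 1) then 1 else 0))

private lemma myF_hasDerivAt (A : ℕ → ℕ → Bool)
    (hA : ∀ n₀ n₁, A (n₀ + 1) n₁ ≤ A n₀ (n₁ + 1)) (χ : ℕ → ℝ) (k : ℕ) (y : ℝ) :
    HasDerivAt (myF A χ k) (myF' A χ k y) y := by
  have hd := (inner_hasDerivAt k (fun i => if A (k - i) i then (1:ℝ) else 0) y).const_mul (χ k)
  have heq : (∑ j ∈ Finset.range (k + 1),
      (k.choose j : ℝ) * y ^ j * (1 - y) ^ (k - j) *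
        ((j : ℝ) * (if A (k - j) j ≠ A (k - j + 1) (j - 1) then 1 else 0) +
          ((k - j : ℕ) : ℝ) * (if A (k - j) j ≠ A (k - j - 1) (j + 1) then 1 else 0)))
      = ∑ j ∈ range (k+1), (k.choose j : ℝ) * (if A (k - j) j then (1:ℝ) else 0) *
          ((j:ℝ) * y ^ (j-1) * (1-y) ^ (k-j) - ((k-j:ℕ):ℝ) * y ^ j * (1-y) ^ (k-j-1)) := by
    rw [← key_identity k (fun i => if A (k - i) i then (1:ℝ) else 0) y]
    refine Finset.sum_congr rfl fun j hj => ?_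
    have hjk : j ≤ k := Nat.lt_succ_iff.mp (Finset.mem_range.mp hj)
    rw [ind_eq A hA k j hjk, ind_eq2 A hA k j hjk]
  unfold myF myF'
  rw [heq]
  exact hd

private lemma myF'_bound (A : ℕ → ℕ → Bool) (χ : ℕ → ℝ) (hχ0 : ∀ k, 0 ≤ χ k) (k : ℕ)
    {y : ℝ} (hy : y ∈ Set.Ioo (0:ℝ) 1) : ‖myF' A χ k y‖ ≤ χ k * (k : ℝ) := by
  obtain ⟨hy0, hy1⟩ := hy
  have h1y : (0:ℝ) ≤ 1 - y := by linarith
  have hy0' : (0:ℝ) ≤ y := hy0.le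
  set q := ∑ j ∈ Finset.range (k + 1),
    (k.choose j : ℝ) * y ^ j * (1 - y) ^ (k - j) *
      ((j : ℝ) * (if A (k - j) j ≠ A (k - j + 1) (j - 1) then 1 else 0) +
        ((k - j : ℕ) : ℝ) * (if A (k - j) j ≠ A (k - j - 1) (j + 1) then 1 else 0)) with hq
  have hbase : ∀ j, (0:ℝ) ≤ (k.choose j : ℝ) * y ^ j * (1 - y) ^ (k - j) := fun j =>
    mul_nonneg (mul_nonneg (Nat.cast_nonneg _) (pow_nonneg hy0' j)) (pow_nonneg h1y _)
  have hq0 : 0 ≤ q := by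
    refine Finset.sum_nonneg fun j hj => ?_
    have hjk : j ≤ k := Nat.lt_succ_iff.mp (Finset.mem_range.mp hj)
    exact mul_nonneg (hbase j) (weight_mem A k j hjk).1
  have hqk : q ≤ (k:ℝ) := by
    calc q ≤ ∑ j ∈ Finset.range (k + 1),
          (k.choose j : ℝ) * y ^ j * (1 - y) ^ (k - j) * (k:ℝ) := by
          refine Finset.sum_le_sum fun j hj => ?_
          have hjk : j ≤ k := Nat.lt_succ_iff.mp (Finset.mem_range.mp hj)
          exact mul_le_mul_of_nonneg_left (weight_mem A k j hjk).2 (hbase j)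
      _ = (∑ j ∈ Finset.range (k + 1),
          (k.choose j : ℝ) * y ^ j * (1 - y) ^ (k - j)) * (k:ℝ) := by
          rw [Finset.sum_mul]
      _ = (k:ℝ) := by rw [binom_sum_one]; ring
  have : myF' A χ k y = χ k * q := rfl
  rw [this, Real.norm_eq_abs, abs_of_nonneg (mul_nonneg (hχ0 k) hq0)]
  exact mul_le_mul_of_nonneg_left hqk (hχ0 k)

private lemma myF_bound (A : ℕ → ℕ → Bool) (χ : ℕ → ℝ) (hχ0 : ∀ k, 0 ≤ χ k) (k : ℕ)
    {y : ℝ} (hy : y ∈ Set.Ioo (0:ℝ) 1) : ‖myF A χ k y‖ ≤ χ k := by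
  obtain ⟨hy0, hy1⟩ := hy
  have h1y : (0:ℝ) ≤ 1 - y := by linarith
  have hy0' : (0:ℝ) ≤ y := hy0.le
  set p := ∑ j ∈ Finset.range (k + 1),
    (k.choose j : ℝ) * y ^ j * (1 - y) ^ (k - j) * (if A (k - j) j then (1:ℝ) else 0) with hp
  have hbase : ∀ j, (0:ℝ) ≤ (k.choose j : ℝ) * y ^ j * (1 - y) ^ (k - j) := fun j =>
    mul_nonneg (mul_nonneg (Nat.cast_nonneg _) (pow_nonneg hy0' j)) (pow_nonneg h1y _)
  have hp0 : 0 ≤ p := by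
    refine Finset.sum_nonneg fun j hj => ?_
    refine mul_nonneg (hbase j) ?_
    split <;> norm_num
  have hp1 : p ≤ 1 := by
    calc p ≤ ∑ j ∈ Finset.range (k + 1),
          (k.choose j : ℝ) * y ^ j * (1 - y) ^ (k - j) := by
          refine Finset.sum_le_sum fun j hj => ?_
          have : (if A (k - j) j then (1:ℝ) else 0) ≤ 1 := by split <;> norm_num
          calc (k.choose j : ℝ) * y ^ j * (1 - y) ^ (k - j) * (if A (k - j) j then (1:ℝ) else 0)
              ≤ (k.choose j : ℝ) * y ^ j * (1 - y) ^ (k - j) * 1 :=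
                mul_le_mul_of_nonneg_left this (hbase j)
            _ = (k.choose j : ℝ) * y ^ j * (1 - y) ^ (k - j) := by ring
      _ = 1 := binom_sum_one y k
  have : myF A χ k y = χ k * p := rfl
  rw [this, Real.norm_eq_abs, abs_of_nonneg (mul_nonneg (hχ0 k) hp0)]
  calc χ k * p ≤ χ k * 1 := mul_le_mul_of_nonneg_left hp1 (hχ0 k)
    _ = χ k := by ring

/-- For a monotone two-colour tree automaton `A` and a child
distribution `χ` with finite mean, the automaton distribution map `Ψ` is
differentiable on `(0,1)` with `Ψ'(x)` equal to the expected number of pivotal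
children at parameter `x` (Margulis–Russo formula). -/
theorem stmt_19 (A : ℕ → ℕ → Bool) (hA : ∀ n₀ n₁, A (n₀ + 1) n₁ ≤ A n₀ (n₁ + 1))
    (χ : ℕ → ℝ) (hχ0 : ∀ k, 0 ≤ χ k) (hχ1 : ∑' k, χ k = 1)
    (hmean : Summable fun k : ℕ => (k : ℝ) * χ k) :
    ∀ x ∈ Set.Ioo (0 : ℝ) 1, HasDerivAt (autoPsi A χ) (autoPivMean A χ x) x := by
  intro x hx
  have hχs : Summable χ := by
    by_contra h
    rw [tsum_eq_zero_of_not_summable h] at hχ1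
    norm_num at hχ1
  have hu : Summable (fun k : ℕ => χ k * (k : ℝ)) := by
    simpa [mul_comm] using hmean
  have hsum0 : Summable (fun k => myF A χ k x) :=
    Summable.of_norm_bounded hχs fun k => myF_bound A χ hχ0 k hx
  have main := hasDerivAt_tsum_of_isPreconnected hu isOpen_Ioo
    (convex_Ioo (0:ℝ) 1).isPreconnected
    (fun k y _ => myF_hasDerivAt A hA χ k y)
    (fun k y hy => myF'_bound A χ hχ0 k hy) hx hsum0 hx
  have e1 : autoPsi A χ = fun z => ∑' k, myF A χ k z := rfl
  have e2 : autoPivMean A χ x = ∑' k, myF' A χ k x := rfl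
  rw [e1, e2]
  exact main
end
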